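/- Let P be an sdf-absorbing strong C-hyperideal of a commutative multiplicative hyperring H with identity 1. Then the following are equivalent: (i) for all nonzero x, y ∈ H, x² − y² ⊆ P implies both x − y ∈ P and x + y ∈ P; (ii) 1 + 1 ∈ P. -/

import Mathlib

open Pointwise

/-- A commutative multiplicative hyperring structure on an abelian group `H`. -/
structure MulHyperring (H : Type*) [AddCommGroup H] where
  hmul : H → H → Set H
  hmul_nonempty : ∀ x y : H, (hmul x y).Nonempty
  hmul_comm : ∀ x y : H, hmul x y = hmul y x
  hmul_assoc : ∀ x y z : H, (⋃ a ∈ hmul y z, hmul x a) = ⋃ b ∈ hmul x y, hmul b z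
  hmul_distrib : ∀ x y z : H, hmul x (y + z) ⊆ hmul x y + hmul x z
  hmul_neg : ∀ x y : H, hmul x (-y) = -(hmul x y)

namespace Hyper

variable {H : Type*} [AddCommGroup H] (mul : H → H → Set H)

/-- `P` is a hyperideal. -/
def IsIdeal (P : Set H) : Prop :=
  (0 : H) ∈ P ∧ (∀ x ∈ P, ∀ y ∈ P, x - y ∈ P) ∧ ∀ r : H, ∀ x ∈ P, mul r x ⊆ P

/-- Hyperproduct `a ∘ b₁ ∘ ⋯ ∘ bₙ`. -/
def hprod : H → List H → Set H
  | a, [] => {a}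
  | a, b :: l => ⋃ t ∈ mul a b, hprod t l

/-- `C` is a finite hyperproduct `c₁ ∘ ⋯ ∘ cₙ`. -/
def IsProduct (C : Set H) : Prop := ∃ (a : H) (l : List H), C = hprod mul a l

/-- `D` is a finite (nonempty) sum of finite hyperproducts. -/
def IsSum (D : Set H) : Prop :=
  ∃ L : List (Set H), L ≠ [] ∧ (∀ C ∈ L, IsProduct mul C) ∧ D = L.sum

/-- `P` is a `𝒞`-hyperideal. -/
def IsCIdeal (P : Set H) : Prop :=
  IsIdeal mul P ∧ ∀ C : Set H, IsProduct mul C → (C ∩ P).Nonempty → C ⊆ P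

/-- `P` is a strong `𝒞`-hyperideal. -/
def IsStrongCIdeal (P : Set H) : Prop :=
  IsIdeal mul P ∧ ∀ D : Set H, IsSum mul D → (D ∩ P).Nonempty → D ⊆ P

/-- The hypersquare `x² = x ∘ x`. -/
def sq (x : H) : Set H := mul x x

/-- `P` is an sdf-absorbing hyperideal. -/
def IsSdf (P : Set H) : Prop :=
  IsIdeal mul P ∧ P ≠ Set.univ ∧
    ∀ x y : H, x ≠ 0 → y ≠ 0 → sq mul x - sq mul y ⊆ P → x - y ∈ P ∨ x + y ∈ P

/-- `P` is a weakly sdf-absorbing hyperideal. -/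
def IsWeaklySdf (P : Set H) : Prop :=
  IsIdeal mul P ∧ P ≠ Set.univ ∧
    ∀ x y : H, x ≠ 0 → y ≠ 0 → (0 : H) ∉ sq mul x - sq mul y →
      sq mul x - sq mul y ⊆ P → x - y ∈ P ∨ x + y ∈ P

/-- `P` is a prime hyperideal. -/
def IsPrime (P : Set H) : Prop :=
  IsIdeal mul P ∧ P ≠ Set.univ ∧ ∀ x y : H, mul x y ⊆ P → x ∈ P ∨ y ∈ P

/-- The radical: intersection of the prime hyperideals containing `P`. -/
def rad (P : Set H) : Set H := ⋂₀ {Q : Set H | IsPrime mul Q ∧ P ⊆ Q}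

/-- `hpow mul x n` is the hyperpower `x^(n+1)`. -/
def hpow (x : H) (n : ℕ) : Set H := hprod mul x (List.replicate n x)

/-- `x` is nilpotent: `0 ∈ xⁿ` for some `n`. -/
def IsNilpotent (x : H) : Prop := ∃ n : ℕ, (0 : H) ∈ hpow mul x n

/-- `x` is a regular element: `x ∈ x² ∘ y` for some `y`. -/
def IsRegularElem (x : H) : Prop := ∃ y : H, x ∈ ⋃ t ∈ sq mul x, mul t y

/-- The hyperideal generated by a set `S`. -/
def span (S : Set H) : Set H := ⋂₀ {Q : Set H | IsIdeal mul Q ∧ S ⊆ Q}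

/-- `P` is a maximal hyperideal. -/
def IsMaximal (P : Set H) : Prop :=
  IsIdeal mul P ∧ P ≠ Set.univ ∧
    ∀ B : Set H, IsIdeal mul B → P ⊆ B → B = P ∨ B = Set.univ

end Hyper

/-- Componentwise hypermultiplication on a product. -/
def prodMul {H₁ H₂ : Type*} (m₁ : H₁ → H₁ → Set H₁) (m₂ : H₂ → H₂ → Set H₂) :
    H₁ × H₂ → H₁ × H₂ → Set (H₁ × H₂) :=
  fun a b => (m₁ a.1 b.1) ×ˢ (m₂ a.2 b.2)

/-- for an sdf-absorbing strong `𝒞`-hyperideal `P` of a hyperring with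
identity `e`, both differences always absorb iff `e + e ∈ P`. -/
theorem stmt2 {H : Type*} [AddCommGroup H] (M : MulHyperring H) (e : H)
    (he : ∀ x : H, x ∈ M.hmul x e) (P : Set H)
    (hS : Hyper.IsStrongCIdeal M.hmul P) (hsdf : Hyper.IsSdf M.hmul P) :
    (∀ x y : H, x ≠ 0 → y ≠ 0 → Hyper.sq M.hmul x - Hyper.sq M.hmul y ⊆ P →
        x - y ∈ P ∧ x + y ∈ P) ↔ e + e ∈ P := by
  obtain ⟨⟨h0, hsubP, hmulP⟩, hStrong⟩ := hS
  have hprod1 : ∀ a b : H, Hyper.IsProduct M.hmul (M.hmul a b) := by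
    intro a b
    refine ⟨a, [b], ?_⟩
    simp [Hyper.hprod, Set.biUnion_of_singleton]
  have hneg : ∀ b ∈ P, -b ∈ P := by
    intro b hb
    simpa using hsubP 0 h0 b hb
  have hadd : ∀ a ∈ P, ∀ b ∈ P, a + b ∈ P := by
    intro a ha b hb
    simpa [sub_neg_eq_add] using hsubP a ha (-b) (hneg b hb)
  constructor
  · intro h
    by_cases he0 : e = 0
    · simpa [he0] using h0
    · have hDsum : Hyper.IsSum M.hmul (Hyper.sq M.hmul e - Hyper.sq M.hmul e) := by
        refine ⟨[M.hmul e e, M.hmul e (-e)], by simp, ?_, ?_⟩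
        · intro C hC
          simp only [List.mem_cons, List.mem_singleton, List.not_mem_nil, or_false] at hC
          rcases hC with h | h <;> (subst h; exact hprod1 _ _)
        · simp [Hyper.sq, sub_eq_add_neg, M.hmul_neg, add_assoc]
      obtain ⟨a, ha⟩ := M.hmul_nonempty e e
      have h0mem : (0 : H) ∈ Hyper.sq M.hmul e - Hyper.sq M.hmul e := by
        simpa [Hyper.sq] using Set.sub_mem_sub ha ha
      have hD : Hyper.sq M.hmul e - Hyper.sq M.hmul e ⊆ P :=
        hStrong _ hDsum ⟨0, h0mem, h0⟩
      exact (h e e he0 he0 hD).2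
  · intro hee x y hx hy hxy
    have key : ∀ z : H, z + z ∈ P := by
      intro z
      have hDsum : Hyper.IsSum M.hmul (M.hmul z e + M.hmul z e) := by
        refine ⟨[M.hmul z e, M.hmul z e], by simp, ?_, ?_⟩
        · intro C hC
          simp only [List.mem_cons, List.mem_singleton, List.not_mem_nil, or_false] at hC
          rcases hC with h | h <;> (subst h; exact hprod1 _ _)
        · simp [add_assoc]
      have h1 : M.hmul z (e + e) ⊆ P := hmulP z (e + e) hee
      have h2 : M.hmul z (e + e) ⊆ M.hmul z e + M.hmul z e := M.hmul_distrib z e e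
      obtain ⟨t, ht⟩ := M.hmul_nonempty z (e + e)
      have hD : M.hmul z e + M.hmul z e ⊆ P :=
        hStrong _ hDsum ⟨t, h2 ht, h1 ht⟩
      exact hD (Set.add_mem_add (he z) (he z))
    rcases hsdf.2.2 x y hx hy hxy with h' | h'
    · refine ⟨h', ?_⟩
      have : x + y = (x - y) + (y + y) := by abel
      rw [this]
      exact hadd _ h' _ (key y)
    · refine ⟨?_, h'⟩
      have : x - y = (x + y) - (y + y) := by abel
      rw [this]
      exact hsubP _ h' _ (key y)
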